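/- Let T be a binary tree and fix integers τ_min ≤ τ_max. Suppose B^opt(S,τ) > 0 is given for every cell (S,τ). Then there exist values B*(S,τ) > 0 for all cells such that: (i) each B*(S,τ) is an integer power of 2 (i.e., of the form 2^m with m ∈ ℤ) and B*(S,τ) ≥ B^opt(S,τ); (ii) Σ_{(S,τ)} B*(S,τ) ≤ 16·Σ_{(S,τ)} B^opt(S,τ); and (iii) (smoothness) for every edge S with parent edge S' and every τ: B*(S,τ) ≤ 8·B*(S',τ) and B*(S',τ) ≤ 8·B*(S,τ), and for every edge S and every τ with τ_min ≤ τ < τ_max: B*(S,τ) ≤ 8·B*(S,τ+1) and B*(S,τ+1) ≤ 8·B*(S,τ). -/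

import Mathlib

open Finset

lemma fiber_sum_le {α β : Type*} [DecidableEq α] [DecidableEq β] (s : Finset α) (f : α → β)
    (t : Finset β) (g : β → ℝ) (C : β → ℝ)
    (himg : ∀ a ∈ s, f a ∈ t)
    (hg : ∀ b ∈ t, 0 ≤ g b)
    (hc : ∀ b ∈ t, ((s.filter fun a => f a = b).card : ℝ) ≤ C b) :
    ∑ a ∈ s, g (f a) ≤ ∑ b ∈ t, C b * g b := by
  rw [← Finset.sum_fiberwise_of_maps_to himg (fun a => g (f a))]
  apply Finset.sum_le_sum
  intro b hb
  have h1 : ∑ a ∈ s.filter (fun a => f a = b), g (f a)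
      = ((s.filter fun a => f a = b).card : ℝ) * g b := by
    rw [Finset.sum_congr rfl (fun a ha => by rw [(Finset.mem_filter.mp ha).2]),
      Finset.sum_const, nsmul_eq_mul]
  rw [h1]
  exact mul_le_mul_of_nonneg_right (hc b hb) (hg b hb)

lemma geo_le (r : ℝ) (h0 : 0 ≤ r) (h1 : r < 1) (n : ℕ) :
    ∑ i ∈ Finset.range n, r ^ i ≤ 1 / (1 - r) := by
  have hne : r ≠ 1 := ne_of_lt h1
  have h2 : 0 < 1 - r := by linarith
  rw [geom_sum_eq hne]
  have h3 : (r ^ n - 1) / (r - 1) = (1 - r ^ n) / (1 - r) := by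
    rw [div_eq_div_iff (sub_ne_zero.mpr hne) (ne_of_gt h2)]; ring
  rw [h3]
  have hn : 0 ≤ r ^ n := pow_nonneg h0 n
  exact div_le_div_of_nonneg_right (by linarith) (le_of_lt h2)

/-- smoothing the optimal budgets.  A finite rooted tree is encoded by a
root, a parent map (fixing the root) and a depth function certifying acyclicity; its
edges are identified with the non-root vertices (the edge `S` joins `S` to
`parent S`), and the parent edge of an edge `S` is the edge `parent S` (which exists
when `parent S ≠ root`).  The tree is binary: every vertex has at most two children.
Cells are pairs `(S, τ)` with `S` an edge and `τ ∈ [τmin, τmax]`.  Given positive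
values `Bopt` on cells, there exist values `Bstar` on cells such that:
(i) each `Bstar S τ` is an integer power of `2` and `Bstar S τ ≥ Bopt S τ`;
(ii) `∑ Bstar ≤ 16 · ∑ Bopt` over all cells; and
(iii) (smoothness) `Bstar` changes by a factor of at most `8` between a cell and the
corresponding cell of the parent edge, and between consecutive density classes. -/
theorem stmt13 {V : Type} [Fintype V] [DecidableEq V]
    (root : V) (parent : V → V) (depth : V → ℕ)
    (hroot : parent root = root)
    (hdepth : ∀ v, v ≠ root → depth v = depth (parent v) + 1)
    (hbinary : ∀ v : V,
      (Finset.univ.filter fun u => u ≠ root ∧ parent u = v).card ≤ 2)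
    (τmin τmax : ℤ) (hτ : τmin ≤ τmax)
    (Bopt : V → ℤ → ℝ)
    (hBopt : ∀ S, S ≠ root → ∀ τ ∈ Finset.Icc τmin τmax, 0 < Bopt S τ) :
    ∃ Bstar : V → ℤ → ℝ,
      (∀ S, S ≠ root → ∀ τ ∈ Finset.Icc τmin τmax,
        (∃ m : ℤ, Bstar S τ = 2 ^ m) ∧ Bopt S τ ≤ Bstar S τ) ∧
      ((∑ S ∈ Finset.univ.filter fun v => v ≠ root,
          ∑ τ ∈ Finset.Icc τmin τmax, Bstar S τ)
        ≤ 16 * ∑ S ∈ Finset.univ.filter fun v => v ≠ root,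
            ∑ τ ∈ Finset.Icc τmin τmax, Bopt S τ) ∧
      (∀ S, S ≠ root → parent S ≠ root → ∀ τ ∈ Finset.Icc τmin τmax,
        Bstar S τ ≤ 8 * Bstar (parent S) τ ∧ Bstar (parent S) τ ≤ 8 * Bstar S τ) ∧
      (∀ S, S ≠ root → ∀ τ : ℤ, τmin ≤ τ → τ < τmax →
        Bstar S τ ≤ 8 * Bstar S (τ + 1) ∧ Bstar S (τ + 1) ≤ 8 * Bstar S τ) := by
  classical
  set E : Finset V := Finset.univ.filter fun v => v ≠ root with hE
  set I : Finset ℤ := Finset.Icc τmin τmax with hI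
  -- basic iterate facts
  have hiter_root : ∀ n, parent^[n] root = root := fun n => Function.iterate_fixed hroot n
  have hreach : ∀ v : V, parent^[depth v] v = root := by
    have key : ∀ n v, depth v = n → parent^[n] v = root := by
      intro n
      induction n using Nat.strong_induction_on with
      | _ n ih =>
        intro v hv
        by_cases h : v = root
        · subst h; exact hiter_root n
        · have hd := hdepth v h
          have hlt : depth (parent v) < n := by omega
          have hp := ih (depth (parent v)) hlt (parent v) rfl
          have : n = depth (parent v) + 1 := by omega
          subst this
          rw [Function.iterate_succ_apply]
          exact hp
    exact fun v => key (depth v) v rfl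
  have hroot_iter : ∀ (i k : ℕ) (a : V), i ≤ k → parent^[i] a = root → parent^[k] a = root := by
    intro i k a hik h
    have : parent^[(k - i) + i] a = root := by
      rw [Function.iterate_add_apply, h]; exact hiter_root _
    rwa [Nat.sub_add_cancel hik] at this
  have hdepth_le : ∀ (k : ℕ) (a : V), depth a ≤ depth (parent^[k] a) + k := by
    intro k
    induction k with
    | zero => intro a; simp
    | succ k ih =>
      intro a
      by_cases h : a = root
      · subst h; rw [hiter_root]; omega
      · have := hdepth a h
        have h2 := ih (parent a)
        rw [Function.iterate_succ_apply]
        omega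
  have hdepth_iter : ∀ (k : ℕ) (a : V), (∀ i, i < k → parent^[i] a ≠ root) →
      depth a = depth (parent^[k] a) + k := by
    intro k
    induction k with
    | zero => intro a _; simp
    | succ k ih =>
      intro a h
      have h0 : a ≠ root := by simpa using h 0 (Nat.succ_pos k)
      have h1 : ∀ i, i < k → parent^[i] (parent a) ≠ root := by
        intro i hi
        have := h (i + 1) (by omega)
        rwa [Function.iterate_succ_apply] at this
      have := ih (parent a) h1
      have hd := hdepth a h0
      rw [Function.iterate_succ_apply]
      omega
  -- tree distance
  have hex : ∀ a b : V, ∃ t : ℕ, ∃ n m : ℕ, n + m = t ∧ parent^[n] a = parent^[m] b :=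
    fun a b => ⟨depth a + depth b, depth a, depth b, rfl, by rw [hreach a, hreach b]⟩
  set d : V → V → ℕ := fun a b => Nat.find (hex a b) with hd_def
  have hd_spec : ∀ a b, ∃ n m : ℕ, n + m = d a b ∧ parent^[n] a = parent^[m] b :=
    fun a b => Nat.find_spec (hex a b)
  have hd_min : ∀ a b (n m : ℕ), parent^[n] a = parent^[m] b → d a b ≤ n + m :=
    fun a b n m h => Nat.find_le ⟨n, m, rfl, h⟩
  have hd_self : ∀ a, d a a = 0 := fun a => Nat.le_zero.mp (hd_min a a 0 0 rfl)
  have hd_bound : ∀ a b, d a b ≤ depth a + depth b := by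
    intro a b
    exact hd_min a b (depth a) (depth b) (by rw [hreach a, hreach b])
  have hd_par₁ : ∀ a b, d a b ≤ d (parent a) b + 1 := by
    intro a b
    obtain ⟨n, m, hnm, h⟩ := hd_spec (parent a) b
    have h2 : parent^[n + 1] a = parent^[m] b := by
      rw [Function.iterate_succ_apply]; exact h
    have := hd_min a b (n + 1) m h2
    omega
  have hd_par₂ : ∀ a b, d (parent a) b ≤ d a b + 1 := by
    intro a b
    obtain ⟨n, m, hnm, h⟩ := hd_spec a b
    cases n with
    | zero =>
      simp only [Function.iterate_zero_apply] at h
      have h2 : parent^[0] (parent a) = parent^[m + 1] b := by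
        rw [Function.iterate_succ_apply', ← h]; rfl
      have := hd_min (parent a) b 0 (m + 1) h2
      omega
    | succ k =>
      rw [Function.iterate_succ_apply] at h
      have := hd_min (parent a) b k m h
      omega
  -- clean minimal pairs
  have hclean : ∀ a b : V, ∃ n m : ℕ, n + m = d a b ∧ parent^[n] a = parent^[m] b ∧
      depth a = depth (parent^[n] a) + n ∧ depth b = depth (parent^[m] b) + m := by
    intro a b
    obtain ⟨n, m, hnm, h⟩ := hd_spec a b
    refine ⟨n, m, hnm, h, ?_, ?_⟩
    · apply hdepth_iter
      intro i hi hri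
      have hra : parent^[n] a = root := hroot_iter i n a (by omega) hri
      have hrb : parent^[m] b = root := by rw [← h, hra]
      have := hd_min a b i m (by rw [hri, hrb])
      omega
    · apply hdepth_iter
      intro i hi hri
      have hrb : parent^[m] b = root := hroot_iter i m b (by omega) hri
      have hra : parent^[n] a = root := by rw [h, hrb]
      have := hd_min a b n i (by rw [hri, hra])
      omega
  choose nf mf hnm hpar hda hdb using hclean
  -- descendant sets
  set Desc : ℕ → V → Finset V :=
    fun k L => Finset.univ.filter fun u => parent^[k] u = L ∧ depth u = depth L + k with hDesc
  have hDesc_card : ∀ (k : ℕ) (L : V), (Desc k L).card ≤ 2 ^ k := by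
    intro k
    induction k with
    | zero =>
      intro L
      have : Desc 0 L ⊆ {L} := by
        intro u hu
        simp only [hDesc, Finset.mem_filter, Function.iterate_zero_apply] at hu
        exact Finset.mem_singleton.mpr (Finset.mem_filter.mp hu).2.1
      calc (Desc 0 L).card ≤ ({L} : Finset V).card := Finset.card_le_card this
        _ = 1 := Finset.card_singleton L
        _ ≤ 2 ^ 0 := le_refl _
    | succ k ih =>
      intro L
      set Ch : Finset V := Finset.univ.filter fun u => u ≠ root ∧ parent u = L with hCh
      have hsub : Desc (k + 1) L ⊆ Ch.biUnion fun c => Desc k c := by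
        intro u hu
        simp only [hDesc, Finset.mem_filter, Finset.mem_univ, true_and] at hu
        obtain ⟨hu1, hu2⟩ := hu
        set c : V := parent^[k] u with hc
        have hc_par : parent c = L := by
          rw [hc, ← Function.iterate_succ_apply' parent k u]; exact hu1
        have hc_ne : c ≠ root := by
          intro hcr
          have hL : L = root := by rw [← hc_par, hcr, hroot]
          have h1 : depth u ≤ depth root + k := by
            have := hdepth_le k u
            rw [← hc, hcr] at this
            exact this
          rw [hL] at hu2
          omega
        have hcd : depth c = depth L + 1 := by rw [hdepth c hc_ne, hc_par]
        apply Finset.mem_biUnion.mpr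
        refine ⟨c, ?_, ?_⟩
        · simp [hCh, hc_ne, hc_par]
        · exact Finset.mem_filter.mpr ⟨Finset.mem_univ u, hc.symm, by omega⟩
      calc (Desc (k + 1) L).card ≤ (Ch.biUnion fun c => Desc k c).card :=
            Finset.card_le_card hsub
        _ ≤ ∑ c ∈ Ch, (Desc k c).card := Finset.card_biUnion_le
        _ ≤ ∑ _c ∈ Ch, 2 ^ k := Finset.sum_le_sum fun c _ => ih c
        _ = Ch.card * 2 ^ k := by rw [Finset.sum_const, smul_eq_mul]
        _ ≤ 2 * 2 ^ k := by
            have := hbinary L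
            exact Nat.mul_le_mul_right _ this
        _ = 2 ^ (k + 1) := by ring
  -- tree sum bound
  have htree_sum : ∀ b : V, ∑ a ∈ E, ((1 : ℝ) / 4) ^ d a b ≤ 8 / 3 := by
    intro b
    set N : ℕ := 2 * Finset.univ.sup depth with hNdef
    have hdN : ∀ v : V, depth v ≤ Finset.univ.sup depth := fun v => Finset.le_sup (Finset.mem_univ v)
    have step1 : ∑ a ∈ E, ((1 : ℝ) / 4) ^ d a b
        = ∑ a ∈ E, (fun p : ℕ × ℕ => ((1 : ℝ) / 4) ^ (p.1 + p.2)) ((nf a b, mf a b)) := by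
      apply Finset.sum_congr rfl
      intro a _
      simp only
      rw [hnm a b]
    rw [step1]
    have step2 : ∑ a ∈ E, (fun p : ℕ × ℕ => ((1 : ℝ) / 4) ^ (p.1 + p.2)) ((nf a b, mf a b))
        ≤ ∑ p ∈ Finset.range (N + 1) ×ˢ Finset.range (N + 1),
            ((2 : ℝ) ^ p.1) * ((1 : ℝ) / 4) ^ (p.1 + p.2) := by
      refine fiber_sum_le E (fun a => ((nf a b, mf a b) : ℕ × ℕ))
        (Finset.range (N + 1) ×ˢ Finset.range (N + 1))
        (fun p : ℕ × ℕ => ((1 : ℝ) / 4) ^ (p.1 + p.2)) (fun p : ℕ × ℕ => (2 : ℝ) ^ p.1)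
        ?_ ?_ ?_
      · intro a _
        have h1 : nf a b + mf a b = d a b := hnm a b
        have h2 : d a b ≤ depth a + depth b := hd_bound a b
        have h3 := hdN a
        have h4 := hdN b
        simp only [Finset.mem_product, Finset.mem_range]
        omega
      · intro p _
        positivity
      · intro p hp
        have hsub : (E.filter fun a => ((nf a b, mf a b) : ℕ × ℕ) = p)
            ⊆ Desc p.1 (parent^[p.2] b) := by
          intro a ha
          obtain ⟨haE, hfa⟩ := Finset.mem_filter.mp ha
          have h1 : nf a b = p.1 := congrArg Prod.fst hfa
          have h2 : mf a b = p.2 := congrArg Prod.snd hfa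
          have h3 : parent^[p.1] a = parent^[p.2] b := by rw [← h1, ← h2]; exact hpar a b
          have h4 : depth a = depth (parent^[p.1] a) + p.1 := by
            rw [← h1]; exact hda a b
          rw [h3] at h4
          exact Finset.mem_filter.mpr ⟨Finset.mem_univ a, h3, h4⟩
        have hcard : (E.filter fun a => ((nf a b, mf a b) : ℕ × ℕ) = p).card ≤ 2 ^ p.1 :=
          le_trans (Finset.card_le_card hsub) (hDesc_card p.1 _)
        calc ((E.filter fun a => ((nf a b, mf a b) : ℕ × ℕ) = p).card : ℝ)
            ≤ ((2 ^ p.1 : ℕ) : ℝ) := Nat.cast_le.mpr hcard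
          _ = (2 : ℝ) ^ p.1 := by push_cast; ring
    refine le_trans step2 ?_
    have step3 : ∑ p ∈ Finset.range (N + 1) ×ˢ Finset.range (N + 1),
        ((2 : ℝ) ^ p.1) * ((1 : ℝ) / 4) ^ (p.1 + p.2)
        = (∑ k ∈ Finset.range (N + 1), ((1 : ℝ) / 2) ^ k)
          * (∑ j ∈ Finset.range (N + 1), ((1 : ℝ) / 4) ^ j) := by
      rw [Finset.sum_mul_sum, Finset.sum_product]
      apply Finset.sum_congr rfl
      intro k _
      apply Finset.sum_congr rfl
      intro j _
      simp only
      rw [pow_add, ← mul_assoc, ← mul_pow]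
      norm_num
    rw [step3]
    have g1 := geo_le ((1 : ℝ) / 2) (by norm_num) (by norm_num) (N + 1)
    have g2 := geo_le ((1 : ℝ) / 4) (by norm_num) (by norm_num) (N + 1)
    have g1' : ∑ k ∈ Finset.range (N + 1), ((1 : ℝ) / 2) ^ k ≤ 2 := by
      refine le_trans g1 ?_; norm_num
    have g2' : ∑ j ∈ Finset.range (N + 1), ((1 : ℝ) / 4) ^ j ≤ 4 / 3 := by
      refine le_trans g2 ?_; norm_num
    have hnn : (0 : ℝ) ≤ ∑ j ∈ Finset.range (N + 1), ((1 : ℝ) / 4) ^ j :=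
      Finset.sum_nonneg fun j _ => by positivity
    calc (∑ k ∈ Finset.range (N + 1), ((1 : ℝ) / 2) ^ k)
          * (∑ j ∈ Finset.range (N + 1), ((1 : ℝ) / 4) ^ j)
        ≤ 2 * (4 / 3) := mul_le_mul g1' g2' hnn (by norm_num)
      _ = 8 / 3 := by norm_num
  -- tau sum bound
  have hτ_sum : ∀ τ' ∈ I, ∑ τ ∈ I, ((1 : ℝ) / 4) ^ (τ - τ').natAbs ≤ 8 / 3 := by
    intro τ' hτ'
    rw [hI, Finset.mem_Icc] at hτ'
    set Mn : ℕ := (τmax - τmin).toNat with hMn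
    have step2 : ∑ τ ∈ I, ((1 : ℝ) / 4) ^ (τ - τ').natAbs
        ≤ ∑ k ∈ Finset.range (Mn + 1), 2 * ((1 : ℝ) / 4) ^ k := by
      refine fiber_sum_le I (fun τ => (τ - τ').natAbs) (Finset.range (Mn + 1))
        (fun k : ℕ => ((1 : ℝ) / 4) ^ k) (fun _ : ℕ => (2 : ℝ)) ?_ ?_ ?_
      · intro τ hτ2
        rw [hI, Finset.mem_Icc] at hτ2
        simp only [Finset.mem_range]
        omega
      · intro k _
        positivity
      · intro k _
        have hsub : (I.filter fun τ => (τ - τ').natAbs = k) ⊆ ({τ' + k, τ' - k} : Finset ℤ) := by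
          intro τ hτ2
          obtain ⟨_, h⟩ := Finset.mem_filter.mp hτ2
          simp only [Finset.mem_insert, Finset.mem_singleton]
          omega
        have h1 : (I.filter fun τ => (τ - τ').natAbs = k).card ≤ 2 := by
          refine le_trans (Finset.card_le_card hsub) ?_
          refine le_trans (Finset.card_insert_le _ _) ?_
          simp
        calc ((I.filter fun τ => (τ - τ').natAbs = k).card : ℝ) ≤ ((2 : ℕ) : ℝ) :=
            Nat.cast_le.mpr h1
          _ = 2 := by norm_num
    refine le_trans step2 ?_
    rw [← Finset.mul_sum]
    have g2 := geo_le ((1 : ℝ) / 4) (by norm_num) (by norm_num) (Mn + 1)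
    have g2' : ∑ j ∈ Finset.range (Mn + 1), ((1 : ℝ) / 4) ^ j ≤ 4 / 3 := by
      refine le_trans g2 ?_; norm_num
    linarith
  -- the weight and smoothed function
  set w : V → ℤ → V → ℤ → ℝ :=
    fun a τ b τ' => ((1 : ℝ) / 4) ^ d a b * ((1 : ℝ) / 4) ^ (τ - τ').natAbs with hw
  have hw_pos : ∀ a τ b τ', 0 < w a τ b τ' := by
    intro a τ b τ'
    positivity
  set W : V → ℤ → ℝ := fun a τ => ∑ b ∈ E, ∑ τ' ∈ I, Bopt b τ' * w a τ b τ' with hW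
  have hterm_nonneg : ∀ (a : V) (τ : ℤ), ∀ b ∈ E, ∀ τ' ∈ I, 0 ≤ Bopt b τ' * w a τ b τ' := by
    intro a τ b hb τ' hτ'
    have hbE : b ≠ root := (Finset.mem_filter.mp hb).2
    exact le_of_lt (mul_pos (hBopt b hbE τ' hτ') (hw_pos a τ b τ'))
  have hW_ge : ∀ a ∈ E, ∀ τ ∈ I, Bopt a τ ≤ W a τ := by
    intro a ha τ hτ'
    have h1 : Bopt a τ * w a τ a τ ≤ ∑ τ' ∈ I, Bopt a τ' * w a τ a τ' :=
      Finset.single_le_sum (fun τ' hτ'' => hterm_nonneg a τ a ha τ' hτ'') hτ'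
    have h2 : (∑ τ' ∈ I, Bopt a τ' * w a τ a τ') ≤ W a τ :=
      Finset.single_le_sum
        (fun b hb => Finset.sum_nonneg fun τ' hτ'' => hterm_nonneg a τ b hb τ' hτ'') ha
    have hw1 : w a τ a τ = 1 := by
      simp [hw, hd_self a]
    rw [hw1, mul_one] at h1
    linarith
  have hW_pos : ∀ a ∈ E, ∀ τ ∈ I, 0 < W a τ := by
    intro a ha τ hτ'
    have := hW_ge a ha τ hτ'
    have hbE : a ≠ root := (Finset.mem_filter.mp ha).2
    linarith [hBopt a hbE τ hτ']
  -- smoothness of W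
  have inv4 : ∀ (x e : ℕ), ((1 : ℝ) / 4) ^ x = 4 ^ e * ((1 : ℝ) / 4) ^ (x + e) := by
    intro x e
    rw [pow_add, ← mul_assoc, mul_comm ((4 : ℝ) ^ e) (((1 : ℝ) / 4) ^ x), mul_assoc, ← mul_pow]
    norm_num
  have hW_le : ∀ (a₁ a₂ : V) (τ₁ τ₂ : ℤ) (e₁ e₂ : ℕ),
      (∀ b, d a₁ b ≤ d a₂ b + e₁) → (∀ τ', (τ₁ - τ').natAbs ≤ (τ₂ - τ').natAbs + e₂) →
      W a₂ τ₂ ≤ 4 ^ (e₁ + e₂) * W a₁ τ₁ := by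
    intro a₁ a₂ τ₁ τ₂ e₁ e₂ h1 h2
    rw [hW]
    simp only
    rw [Finset.mul_sum]
    apply Finset.sum_le_sum
    intro b hb
    rw [Finset.mul_sum]
    apply Finset.sum_le_sum
    intro τ' hτ'
    have hB := (hBopt b (Finset.mem_filter.mp hb).2 τ' hτ').le
    rw [hw]
    simp only
    have k1 : ((1 : ℝ) / 4) ^ (d a₂ b + e₁) ≤ ((1 : ℝ) / 4) ^ d a₁ b :=
      pow_le_pow_of_le_one (by norm_num) (by norm_num) (h1 b)
    have k2 : ((1 : ℝ) / 4) ^ ((τ₂ - τ').natAbs + e₂) ≤ ((1 : ℝ) / 4) ^ (τ₁ - τ').natAbs :=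
      pow_le_pow_of_le_one (by norm_num) (by norm_num) (h2 τ')
    have key : ((1 : ℝ) / 4) ^ d a₂ b * ((1 : ℝ) / 4) ^ (τ₂ - τ').natAbs
        ≤ 4 ^ (e₁ + e₂) * (((1 : ℝ) / 4) ^ d a₁ b * ((1 : ℝ) / 4) ^ (τ₁ - τ').natAbs) := by
      have e1 : ((1 : ℝ) / 4) ^ d a₂ b * ((1 : ℝ) / 4) ^ (τ₂ - τ').natAbs
          = 4 ^ (e₁ + e₂) * (((1 : ℝ) / 4) ^ (d a₂ b + e₁)
              * ((1 : ℝ) / 4) ^ ((τ₂ - τ').natAbs + e₂)) := by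
        rw [inv4 (d a₂ b) e₁, inv4 ((τ₂ - τ').natAbs) e₂, pow_add (4 : ℝ)]
        ring
      rw [e1]
      have h4 : (0 : ℝ) ≤ 4 ^ (e₁ + e₂) := by positivity
      exact mul_le_mul_of_nonneg_left
        (mul_le_mul k1 k2 (by positivity) (by positivity)) h4
    calc Bopt b τ' * (((1 : ℝ) / 4) ^ d a₂ b * ((1 : ℝ) / 4) ^ (τ₂ - τ').natAbs)
        ≤ Bopt b τ' * (4 ^ (e₁ + e₂)
            * (((1 : ℝ) / 4) ^ d a₁ b * ((1 : ℝ) / 4) ^ (τ₁ - τ').natAbs)) :=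
          mul_le_mul_of_nonneg_left key hB
      _ = 4 ^ (e₁ + e₂)
            * (Bopt b τ' * (((1 : ℝ) / 4) ^ d a₁ b * ((1 : ℝ) / 4) ^ (τ₁ - τ').natAbs)) := by
          ring
  -- the smoothed budgets
  set Bstar : V → ℤ → ℝ := fun a τ => (2 : ℝ) ^ (Int.log 2 (W a τ) + 1) with hB
  have h12 : (1 : ℕ) < 2 := one_lt_two
  have hup : ∀ a ∈ E, ∀ τ ∈ I, W a τ ≤ Bstar a τ := by
    intro a ha τ hτ'
    exact le_of_lt (Int.lt_zpow_succ_log_self h12 (W a τ))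
  have hdown : ∀ a ∈ E, ∀ τ ∈ I, Bstar a τ ≤ 2 * W a τ := by
    intro a ha τ hτ'
    have h1 : ((2 : ℕ) : ℝ) ^ Int.log 2 (W a τ) ≤ W a τ :=
      Int.zpow_log_le_self h12 (hW_pos a ha τ hτ')
    have h2 : Bstar a τ = 2 * (2 : ℝ) ^ Int.log 2 (W a τ) := by
      show (2 : ℝ) ^ (Int.log 2 (W a τ) + 1) = 2 * (2 : ℝ) ^ Int.log 2 (W a τ)
      rw [zpow_add_one₀ (by norm_num : (2 : ℝ) ≠ 0)]
      ring
    rw [h2]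
    push_cast at h1
    linarith
    -- assemble
  refine ⟨Bstar, ?_, ?_, ?_, ?_⟩
  · intro S hS τ hτ'
    have hSE : S ∈ E := by rw [hE]; simp [hS]
    exact ⟨⟨Int.log 2 (W S τ) + 1, rfl⟩,
      le_trans (hW_ge S hSE τ hτ') (hup S hSE τ hτ')⟩
  · -- sum bound
    have hP : ∀ f : V → ℤ → ℝ, ∑ a ∈ E, ∑ τ ∈ I, f a τ = ∑ p ∈ E ×ˢ I, f p.1 p.2 := by
      intro f
      rw [Finset.sum_product]
    have hBopt_nonneg : ∀ q ∈ E ×ˢ I, 0 ≤ Bopt q.1 q.2 := by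
      intro q hq
      obtain ⟨h1, h2⟩ := Finset.mem_product.mp hq
      exact (hBopt q.1 (Finset.mem_filter.mp h1).2 q.2 h2).le
    have hwq : ∀ q ∈ E ×ˢ I, ∑ p ∈ E ×ˢ I, w p.1 p.2 q.1 q.2 ≤ 64 / 9 := by
      intro q hq
      obtain ⟨hq1, hq2⟩ := Finset.mem_product.mp hq
      rw [Finset.sum_product]
      have e1 : ∑ a ∈ E, ∑ τ ∈ I, w a τ q.1 q.2
          = (∑ a ∈ E, ((1 : ℝ) / 4) ^ d a q.1)
            * (∑ τ ∈ I, ((1 : ℝ) / 4) ^ (τ - q.2).natAbs) := by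
        rw [Finset.sum_mul_sum]
      rw [e1]
      have b1 := htree_sum q.1
      have b2 := hτ_sum q.2 hq2
      have n2 : (0 : ℝ) ≤ ∑ τ ∈ I, ((1 : ℝ) / 4) ^ (τ - q.2).natAbs :=
        Finset.sum_nonneg fun τ _ => by positivity
      calc (∑ a ∈ E, ((1 : ℝ) / 4) ^ d a q.1)
            * (∑ τ ∈ I, ((1 : ℝ) / 4) ^ (τ - q.2).natAbs)
          ≤ (8 / 3) * (8 / 3) := mul_le_mul b1 b2 n2 (by norm_num)
        _ = 64 / 9 := by norm_num
    have hWsum : ∑ p ∈ E ×ˢ I, W p.1 p.2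
        = ∑ q ∈ E ×ˢ I, Bopt q.1 q.2 * ∑ p ∈ E ×ˢ I, w p.1 p.2 q.1 q.2 := by
      have e2 : ∀ p ∈ E ×ˢ I, W p.1 p.2
          = ∑ q ∈ E ×ˢ I, Bopt q.1 q.2 * w p.1 p.2 q.1 q.2 := by
        intro p _
        rw [hW]
        simp only
        rw [Finset.sum_product]
      rw [Finset.sum_congr rfl e2, Finset.sum_comm]
      exact Finset.sum_congr rfl fun q _ => (Finset.mul_sum _ _ _).symm
    have hWsum_le : ∑ p ∈ E ×ˢ I, W p.1 p.2 ≤ (64 / 9) * ∑ q ∈ E ×ˢ I, Bopt q.1 q.2 := by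
      rw [hWsum, Finset.mul_sum]
      apply Finset.sum_le_sum
      intro q hq
      calc Bopt q.1 q.2 * ∑ p ∈ E ×ˢ I, w p.1 p.2 q.1 q.2
          ≤ Bopt q.1 q.2 * (64 / 9) :=
            mul_le_mul_of_nonneg_left (hwq q hq) (hBopt_nonneg q hq)
        _ = 64 / 9 * Bopt q.1 q.2 := by ring
    have hBstar_le : ∑ p ∈ E ×ˢ I, Bstar p.1 p.2 ≤ 2 * ∑ p ∈ E ×ˢ I, W p.1 p.2 := by
      rw [Finset.mul_sum]
      apply Finset.sum_le_sum
      intro p hp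
      obtain ⟨h1, h2⟩ := Finset.mem_product.mp hp
      exact hdown p.1 h1 p.2 h2
    have hBopt_sum_nonneg : 0 ≤ ∑ q ∈ E ×ˢ I, Bopt q.1 q.2 :=
      Finset.sum_nonneg hBopt_nonneg
    rw [hP Bstar, hP Bopt]
    calc ∑ p ∈ E ×ˢ I, Bstar p.1 p.2
        ≤ 2 * ∑ p ∈ E ×ˢ I, W p.1 p.2 := hBstar_le
      _ ≤ 2 * ((64 / 9) * ∑ q ∈ E ×ˢ I, Bopt q.1 q.2) := by linarith
      _ ≤ 16 * ∑ q ∈ E ×ˢ I, Bopt q.1 q.2 := by linarith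
  · intro S hS hPS τ hτ'
    have hSE : S ∈ E := by rw [hE]; simp [hS]
    have hPE : parent S ∈ E := by rw [hE]; simp [hPS]
    have hWa : W S τ ≤ 4 * W (parent S) τ := by
      have := hW_le (parent S) S τ τ 1 0 (fun b => hd_par₂ S b) (fun τ'' => by omega)
      norm_num at this
      exact this
    have hWb : W (parent S) τ ≤ 4 * W S τ := by
      have := hW_le S (parent S) τ τ 1 0 (fun b => hd_par₁ S b) (fun τ'' => by omega)
      norm_num at this
      exact this
    constructor
    · calc Bstar S τ ≤ 2 * W S τ := hdown S hSE τ hτ'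
        _ ≤ 8 * W (parent S) τ := by linarith
        _ ≤ 8 * Bstar (parent S) τ := by linarith [hup (parent S) hPE τ hτ']
    · calc Bstar (parent S) τ ≤ 2 * W (parent S) τ := hdown (parent S) hPE τ hτ'
        _ ≤ 8 * W S τ := by linarith
        _ ≤ 8 * Bstar S τ := by linarith [hup S hSE τ hτ']
  · intro S hS τ hτ1 hτ2
    have hSE : S ∈ E := by rw [hE]; simp [hS]
    have hτI : τ ∈ I := by rw [hI]; simp [Finset.mem_Icc]; omega
    have hτI' : τ + 1 ∈ I := by rw [hI]; simp [Finset.mem_Icc]; omega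
    have hWa : W S τ ≤ 4 * W S (τ + 1) := by
      have := hW_le S S (τ + 1) τ 0 1 (fun b => by omega) (fun τ'' => by omega)
      norm_num at this
      exact this
    have hWb : W S (τ + 1) ≤ 4 * W S τ := by
      have := hW_le S S τ (τ + 1) 0 1 (fun b => by omega) (fun τ'' => by omega)
      norm_num at this
      exact this
    constructor
    · calc Bstar S τ ≤ 2 * W S τ := hdown S hSE τ hτI
        _ ≤ 8 * W S (τ + 1) := by linarith
        _ ≤ 8 * Bstar S (τ + 1) := by linarith [hup S hSE (τ + 1) hτI']
    · calc Bstar S (τ + 1) ≤ 2 * W S (τ + 1) := hdown S hSE (τ + 1) hτI'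
        _ ≤ 8 * W S τ := by linarith
        _ ≤ 8 * Bstar S τ := by linarith [hup S hSE τ hτI]
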